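/- Let {π^k} be a sequence of deterministic action-dependent policies generated by Algorithm AD-MPI, associated with an ADG G_d. Then the sequence of value functions is monotone nondecreasing, V^{π^{k+1}}(s) ≥ V^{π^k}(s) for all k and all s ∈ S; it is bounded above by the optimal value, V^{π^k}(s) ≤ V^*(s) for all k, s; and it converges in finitely many terms: there exist V° : S → ℝ and K ∈ ℕ such that V^{π^k} = V° for all k ≥ K. -/

import Mathlib

/-- The one-step lookahead value `Q^V(s,a) = r(s,a) + γ Σ_{s'} P(s'|s,a) V(s')`. -/
def QV {n : ℕ} {St : Type*} [Fintype St] {A : Fin n → Type*}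
    (P : St → (∀ i, A i) → St → ℝ) (r : St → (∀ i, A i) → ℝ) (γ : ℝ)
    (V : St → ℝ) : St → (∀ i, A i) → ℝ :=
  fun s a => r s a + γ * ∑ s', P s a s' * V s'

/-- The joint action induced by a deterministic action-dependent policy `π`, with the
coordinates in `F` clamped to the values of `a'`: the agents outside `F` evaluate their
policies in increasing index order (well defined since `Ed j i → j < i`), each `π i`
conditioning on the actions of its in-neighbors `N_d(i) = {j | Ed j i}`. Taking
`F = ∅` yields the induced joint action `ā_π(s)`. -/
def indAct {n : ℕ} {St : Type*} {A : Fin n → Type*}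
    (Ed : Fin n → Fin n → Prop) [DecidableRel Ed]
    (hEd : ∀ i j : Fin n, Ed j i → j < i)
    (π : (i : Fin n) → St → ((j : {j : Fin n // Ed j i}) → A j.1) → A i)
    (F : Finset (Fin n)) (a' : ∀ i, A i) (s : St) : (i : Fin n) → A i
  | i =>
    if i ∈ F then a' i
    else π i s (fun j => indAct Ed hEd π F a' s j.1)
termination_by i => (i : ℕ)
decreasing_by exact hEd i j.1 j.2

/-- The full joint action built from clamped values `c` on `N_d(i)` and a value `ai`
for agent `i` (coordinates outside `N_d[i]` are filled arbitrarily; they are irrelevant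
when this vector is used to clamp only the coordinates in `N_d[i]`). -/
noncomputable def cvec {n : ℕ} {A : Fin n → Type*} [∀ i, Nonempty (A i)]
    (Ed : Fin n → Fin n → Prop) [DecidableRel Ed] (i : Fin n)
    (c : (j : {j : Fin n // Ed j i}) → A j.1) (ai : A i) : ∀ j, A j :=
  fun j =>
    if h : Ed j i then c ⟨j, h⟩
    else if h : j = i then cast (congrArg A h.symm) ai
    else Classical.arbitrary (A j)

/-- `(πseq, Vseq)` is an execution of Algorithm AD-MPI:
* policy evaluation: `Vseq k` is the value function `V^{π^k}`, i.e. the fixed point of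
  `T_{π^k} V (s) = Q^V(s, ā_{π^k}(s))`;
* policy iteration: for each agent `i` (in increasing order), `πseq (k+1) i (s, c)`
  maximizes `a_i ↦ Q^{V^{π^k}}(s, c, a_i, ā_{π^{k,i}_{-N_d[i]}}(s, c, a_i))`, where
  `π^{k,i}` uses the already-updated policies `π^{k+1}_j` for `j < i` and `π^k_j`
  otherwise, and the coordinates in `N_d[i]` are clamped to `(c, a_i)`. -/
noncomputable def ADMPI {n : ℕ} {St : Type*} [Fintype St] {A : Fin n → Type*}
    [∀ i, Fintype (A i)] [∀ i, Nonempty (A i)]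
    (P : St → (∀ i, A i) → St → ℝ) (r : St → (∀ i, A i) → ℝ) (γ : ℝ)
    (Ed : Fin n → Fin n → Prop) [DecidableRel Ed]
    (hEd : ∀ i j : Fin n, Ed j i → j < i)
    (πseq : ℕ → (i : Fin n) → St → ((j : {j : Fin n // Ed j i}) → A j.1) → A i)
    (Vseq : ℕ → St → ℝ) : Prop :=
  (∀ (k : ℕ) (s : St) (a' : ∀ i, A i),
      Vseq k s = QV P r γ (Vseq k) s (indAct Ed hEd (πseq k) ∅ a' s)) ∧
  (∀ (k : ℕ) (i : Fin n) (s : St) (c : (j : {j : Fin n // Ed j i}) → A j.1)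
      (ai : A i),
      QV P r γ (Vseq k) s
        (indAct Ed hEd (fun j => if j < i then πseq (k+1) j else πseq k j)
          (Finset.univ.filter fun j => Ed j i ∨ j = i) (cvec Ed i c ai) s)
      ≤ QV P r γ (Vseq k) s
        (indAct Ed hEd (fun j => if j < i then πseq (k+1) j else πseq k j)
          (Finset.univ.filter fun j => Ed j i ∨ j = i)
          (cvec Ed i c (πseq (k+1) i s c)) s))

/-- along any execution of Algorithm AD-MPI, the value-function sequence
`V^{π^k}` is monotone nondecreasing, bounded above by the optimal value `V^*` (the
fixed point of the Bellman optimality operator), and converges in finitely many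
terms. -/

lemma finStrong {n : ℕ} {C : Fin n → Prop}
    (h : ∀ i : Fin n, (∀ j : Fin n, j < i → C j) → C i) : ∀ i, C i :=
  fun i => WellFoundedLT.induction i h


lemma indAct_eq {n : ℕ} {St : Type*} {A : Fin n → Type*}
    (Ed : Fin n → Fin n → Prop) [DecidableRel Ed]
    (hEd : ∀ i j : Fin n, Ed j i → j < i)
    (π : (i : Fin n) → St → ((j : {j : Fin n // Ed j i}) → A j.1) → A i)
    (F : Finset (Fin n)) (a' : ∀ i, A i) (s : St) (i : Fin n) :
    indAct Ed hEd π F a' s i =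
      if i ∈ F then a' i else π i s (fun j => indAct Ed hEd π F a' s j.1) := by
  rw [indAct]


lemma indAct_unique {n : ℕ} {St : Type*} {A : Fin n → Type*}
    (Ed : Fin n → Fin n → Prop) [DecidableRel Ed]
    (hEd : ∀ i j : Fin n, Ed j i → j < i)
    (π : (i : Fin n) → St → ((j : {j : Fin n // Ed j i}) → A j.1) → A i)
    (F : Finset (Fin n)) (a' : ∀ i, A i) (s : St) (b : ∀ i, A i)
    (hF : ∀ i ∈ F, b i = a' i)
    (hnF : ∀ i ∉ F, b i = π i s (fun j => b j.1)) :
    ∀ i, b i = indAct Ed hEd π F a' s i := by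
  refine finStrong (fun ii ih => ?_)
  rw [indAct_eq]
  by_cases h : ii ∈ F
  · simp [h, hF ii h]
  · rw [if_neg h, hnF ii h]
    congr 1
    funext j
    exact ih j.1 (hEd ii j.1 j.2)


def mixP {n : ℕ} {St : Type*} {A : Fin n → Type*}
    (Ed : Fin n → Fin n → Prop)
    (πo πn : (i : Fin n) → St → ((j : {j : Fin n // Ed j i}) → A j.1) → A i)
    (m : ℕ) : (i : Fin n) → St → ((j : {j : Fin n // Ed j i}) → A j.1) → A i :=
  fun j => if (j : ℕ) < m then πn j else πo j


lemma cvec_self {n : ℕ} {A : Fin n → Type*} [∀ i, Nonempty (A i)]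
    (Ed : Fin n → Fin n → Prop) [DecidableRel Ed] (i : Fin n) (hii : ¬ Ed i i)
    (c : (j : {j : Fin n // Ed j i}) → A j.1) (ai : A i) :
    cvec Ed i c ai i = ai := by
  simp [cvec, hii]


lemma chain_step {n : ℕ} {St : Type*} [Fintype St] {A : Fin n → Type*}
    [∀ i, Fintype (A i)] [∀ i, Nonempty (A i)]
    (P : St → (∀ i, A i) → St → ℝ) (r : St → (∀ i, A i) → ℝ) (γ : ℝ)
    (Ed : Fin n → Fin n → Prop) [DecidableRel Ed]
    (hEd : ∀ i j : Fin n, Ed j i → j < i)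
    (πo πn : (i : Fin n) → St → ((j : {j : Fin n // Ed j i}) → A j.1) → A i)
    (V : St → ℝ)
    (hImp : ∀ (i : Fin n) (s : St) (c : (j : {j : Fin n // Ed j i}) → A j.1) (ai : A i),
      QV P r γ V s
        (indAct Ed hEd (fun j => if j < i then πn j else πo j)
          (Finset.univ.filter fun j => Ed j i ∨ j = i) (cvec Ed i c ai) s)
      ≤ QV P r γ V s
        (indAct Ed hEd (fun j => if j < i then πn j else πo j)
          (Finset.univ.filter fun j => Ed j i ∨ j = i)
          (cvec Ed i c (πn i s c)) s))
    (adef : ∀ i, A i) (s : St) (m : ℕ) (hm : m < n) :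
    QV P r γ V s (indAct Ed hEd (mixP Ed πo πn m) ∅ adef s)
      ≤ QV P r γ V s (indAct Ed hEd (mixP Ed πo πn (m+1)) ∅ adef s) := by
  classical
  set i : Fin n := ⟨m, hm⟩ with hi
  set am : ∀ j, A j := indAct Ed hEd (mixP Ed πo πn m) ∅ adef s with ham
  set am1 : ∀ j, A j := indAct Ed hEd (mixP Ed πo πn (m+1)) ∅ adef s with ham1
  set Fcl : Finset (Fin n) := Finset.univ.filter fun j => Ed j i ∨ j = i with hFcl
  set qi : (j : Fin n) → St → ((t : {t : Fin n // Ed t j}) → A t.1) → A j :=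
    fun j => if j < i then πn j else πo j with hqi
  have hqim : qi = mixP Ed πo πn m := by
    funext j
    simp only [hqi, mixP, Fin.lt_def, hi]
  -- recursion identities for am, am1
  have ham_rec : ∀ j : Fin n, am j = mixP Ed πo πn m j s (fun t => am t.1) := by
    intro j; rw [ham, indAct_eq]; simp
  have ham1_rec : ∀ j : Fin n, am1 j = mixP Ed πo πn (m+1) j s (fun t => am1 t.1) := by
    intro j; rw [ham1, indAct_eq]; simp
  -- agreement below the threshold
  have agree : ∀ j : Fin n, (j : ℕ) < m → am1 j = am j := by
    refine finStrong (fun j ih => fun hj => ?_)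
    rw [ham_rec, ham1_rec]
    have e1 : mixP Ed (A := A) (St := St) πo πn (m+1) j = πn j := if_pos (Nat.lt_succ_of_lt hj)
    have e2 : mixP Ed (A := A) (St := St) πo πn m j = πn j := if_pos hj
    rw [e1, e2]
    congr 1
    funext t
    exact ih t.1 (hEd j t.1 t.2) (lt_trans (hEd j t.1 t.2) hj)
  have hEd_ii : ¬ Ed i i := fun h => absurd (hEd i i h) (lt_irrefl i)
  set c : (j : {j : Fin n // Ed j i}) → A j.1 := fun j => am j.1 with hc
  -- identity 1: clamped indAct with old action equals am
  have id1 : indAct Ed hEd qi Fcl (cvec Ed i c (am i)) s = am := by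
    refine funext fun j => (indAct_unique Ed hEd qi Fcl _ s am ?_ ?_ j).symm
    · intro j hj
      rcases (Finset.mem_filter.1 hj).2 with h | h
      · rw [show cvec Ed i c (am i) j = c ⟨j, h⟩ from dif_pos h]
      · rw [h, cvec_self Ed i hEd_ii]
    · intro j _
      rw [hqim]; exact ham_rec j
  -- identity 2: clamped indAct with new action equals am1
  have hci : (fun t : {t : Fin n // Ed t i} => am1 t.1) = c := by
    funext t
    exact agree t.1 (hEd i t.1 t.2)
  have id2 : indAct Ed hEd qi Fcl (cvec Ed i c (πn i s c)) s = am1 := by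
    refine funext fun j => (indAct_unique Ed hEd qi Fcl _ s am1 ?_ ?_ j).symm
    · intro j hj
      rcases (Finset.mem_filter.1 hj).2 with h | h
      · rw [show cvec Ed i c (πn i s c) j = c ⟨j, h⟩ from dif_pos h]
        exact agree j (hEd i j h)
      · rw [h, cvec_self Ed i hEd_ii]
        rw [ham1_rec i, show mixP Ed (A := A) (St := St) πo πn (m+1) i = πn i from
          if_pos (Nat.lt_succ_self m), hci]
    · intro j hj
      have hji : j ≠ i := fun h => hj (Finset.mem_filter.2 ⟨Finset.mem_univ _, Or.inr h⟩)
      have hlt : ((j : ℕ) < m + 1) ↔ j < i := by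
        rw [Fin.lt_def, hi]
        constructor
        · intro h
          rcases Nat.lt_succ_iff_lt_or_eq.1 h with h | h
          · exact h
          · exact absurd (Fin.ext h : j = i) hji
        · exact fun h => Nat.lt_succ_of_lt h
      rw [ham1_rec j]
      by_cases h : j < i
      · rw [show mixP Ed (A := A) (St := St) πo πn (m+1) j = πn j from if_pos (hlt.2 h),
          show qi j = πn j from if_pos h]
      · rw [show mixP Ed (A := A) (St := St) πo πn (m+1) j = πo j from
          if_neg (fun hh => h (hlt.1 hh)),
          show qi j = πo j from if_neg h]
  have := hImp i s c (am i)
  rw [id1, id2] at this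
  exact this


lemma sub_le_super {n : ℕ} {St : Type*} [Fintype St] {A : Fin n → Type*}
    (P : St → (∀ i, A i) → St → ℝ) (r : St → (∀ i, A i) → ℝ) (γ : ℝ)
    (hP0 : ∀ s a s', 0 ≤ P s a s') (hP1 : ∀ s a, ∑ s', P s a s' = 1)
    (hγ0 : 0 ≤ γ) (hγ1 : γ < 1)
    (b : St → ∀ i, A i) (W V : St → ℝ)
    (hW : ∀ s, W s ≤ QV P r γ W s (b s))
    (hV : ∀ s, QV P r γ V s (b s) ≤ V s) :
    ∀ s, W s ≤ V s := by
  cases isEmpty_or_nonempty St with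
  | inl h => exact fun s => (h.false s).elim
  | inr h =>
    classical
    set D : Finset ℝ := Finset.univ.image (fun s : St => W s - V s) with hD
    have hDne : D.Nonempty := ⟨W h.some - V h.some, Finset.mem_image_of_mem _ (Finset.mem_univ _)⟩
    set d : ℝ := D.max' hDne with hd
    have hled : ∀ s : St, W s - V s ≤ d := fun s =>
      Finset.le_max' D _ (Finset.mem_image_of_mem _ (Finset.mem_univ s))
    obtain ⟨s0, -, hs0⟩ := Finset.mem_image.1 (D.max'_mem hDne)
    have key : d ≤ γ * d := by
      have h1 : W s0 - V s0 ≤ QV P r γ W s0 (b s0) - QV P r γ V s0 (b s0) :=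
        sub_le_sub (hW s0) (hV s0)
      have h2 : QV P r γ W s0 (b s0) - QV P r γ V s0 (b s0)
          = γ * ∑ s', P s0 (b s0) s' * (W s' - V s') := by
        simp only [QV, Finset.mul_sum, ← Finset.sum_sub_distrib]
        rw [show ∀ x y z : ℝ, x + y - (x + z) = y - z by intros; ring]
        rw [← Finset.sum_sub_distrib]
        refine Finset.sum_congr rfl (fun s' _ => by ring)
      have h3 : ∑ s', P s0 (b s0) s' * (W s' - V s') ≤ ∑ s' : St, P s0 (b s0) s' * d := by
        refine Finset.sum_le_sum (fun s' _ => ?_)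
        exact mul_le_mul_of_nonneg_left (hled s') (hP0 _ _ _)
      have h4 : ∑ s' : St, P s0 (b s0) s' * d = d := by
        rw [← Finset.sum_mul, hP1, one_mul]
      calc d = W s0 - V s0 := hs0.symm
        _ ≤ γ * ∑ s', P s0 (b s0) s' * (W s' - V s') := h1.trans (le_of_eq h2)
        _ ≤ γ * d := by rw [← h4]; exact mul_le_mul_of_nonneg_left h3 hγ0
    have hd0 : d ≤ 0 := by nlinarith
    intro s
    have := (hled s).trans hd0
    linarith


lemma chain_full {n : ℕ} {St : Type*} [Fintype St] {A : Fin n → Type*}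
    [∀ i, Fintype (A i)] [∀ i, Nonempty (A i)]
    (P : St → (∀ i, A i) → St → ℝ) (r : St → (∀ i, A i) → ℝ) (γ : ℝ)
    (Ed : Fin n → Fin n → Prop) [DecidableRel Ed]
    (hEd : ∀ i j : Fin n, Ed j i → j < i)
    (πo πn : (i : Fin n) → St → ((j : {j : Fin n // Ed j i}) → A j.1) → A i)
    (V : St → ℝ)
    (hImp : ∀ (i : Fin n) (s : St) (c : (j : {j : Fin n // Ed j i}) → A j.1) (ai : A i),
      QV P r γ V s
        (indAct Ed hEd (fun j => if j < i then πn j else πo j)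
          (Finset.univ.filter fun j => Ed j i ∨ j = i) (cvec Ed i c ai) s)
      ≤ QV P r γ V s
        (indAct Ed hEd (fun j => if j < i then πn j else πo j)
          (Finset.univ.filter fun j => Ed j i ∨ j = i)
          (cvec Ed i c (πn i s c)) s))
    (adef : ∀ i, A i) (s : St) :
    QV P r γ V s (indAct Ed hEd πo ∅ adef s)
      ≤ QV P r γ V s (indAct Ed hEd πn ∅ adef s) := by
  have h0 : mixP (St := St) (A := A) Ed πo πn 0 = πo := by
    funext j; simp [mixP]
  have hn : mixP (St := St) (A := A) Ed πo πn n = πn := by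
    funext j; simp [mixP, j.isLt]
  have key : ∀ m, m ≤ n → QV P r γ V s (indAct Ed hEd (mixP Ed πo πn 0) ∅ adef s)
      ≤ QV P r γ V s (indAct Ed hEd (mixP Ed πo πn m) ∅ adef s) := by
    intro m
    induction m with
    | zero => exact fun _ => le_rfl
    | succ m ih =>
      intro hm
      exact (ih (Nat.le_of_succ_le hm)).trans
        (chain_step P r γ Ed hEd πo πn V hImp adef s m hm)
  have := key n le_rfl
  rwa [h0, hn] at this

open Classical in
/-- the value function determined by a state-to-joint-action map, when it exists. -/
noncomputable def hval {n : ℕ} {St : Type*} [Fintype St] {A : Fin n → Type*}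
    (P : St → (∀ i, A i) → St → ℝ) (r : St → (∀ i, A i) → ℝ) (γ : ℝ)
    (b : St → ∀ i, A i) : St → ℝ :=
  if h : ∃ V : St → ℝ, ∀ s, V s = QV P r γ V s (b s) then h.choose else 0

theorem stmt12 {n : ℕ} {St : Type*} [Fintype St] {A : Fin n → Type*}
    [∀ i, Fintype (A i)] [∀ i, Nonempty (A i)]
    (P : St → (∀ i, A i) → St → ℝ) (r : St → (∀ i, A i) → ℝ) (γ : ℝ)
    (hP0 : ∀ s a s', 0 ≤ P s a s') (hP1 : ∀ s a, ∑ s', P s a s' = 1)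
    (hγ0 : 0 ≤ γ) (hγ1 : γ < 1)
    (Ed : Fin n → Fin n → Prop) [DecidableRel Ed]
    (hEd : ∀ i j : Fin n, Ed j i → j < i)
    (πseq : ℕ → (i : Fin n) → St → ((j : {j : Fin n // Ed j i}) → A j.1) → A i)
    (Vseq : ℕ → St → ℝ)
    (hADMPI : ADMPI P r γ Ed hEd πseq Vseq)
    (Vstar : St → ℝ)
    (hVstar : ∀ s, Vstar s = ⨆ a : ∀ i, A i, QV P r γ Vstar s a) :
    (∀ (k : ℕ) (s : St), Vseq k s ≤ Vseq (k+1) s) ∧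
    (∀ (k : ℕ) (s : St), Vseq k s ≤ Vstar s) ∧
    (∃ (Vcirc : St → ℝ) (K : ℕ), ∀ k ≥ K, ∀ s, Vseq k s = Vcirc s) := by
  classical
  obtain ⟨hEval, hImp⟩ := hADMPI
  have adef : ∀ i, A i := fun i => Classical.arbitrary _
  set bk : ℕ → St → ∀ i, A i := fun k s => indAct Ed hEd (πseq k) ∅ adef s with hbk
  have hfix : ∀ k s, Vseq k s = QV P r γ (Vseq k) s (bk k s) := fun k s => hEval k s adef
  have hmono : ∀ k s, Vseq k s ≤ Vseq (k+1) s := by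
    intro k
    refine sub_le_super P r γ hP0 hP1 hγ0 hγ1 (bk (k+1)) _ _ ?_
      (fun s => le_of_eq (hfix (k+1) s).symm)
    intro s
    exact (le_of_eq (hfix k s)).trans
      (chain_full P r γ Ed hEd (πseq k) (πseq (k+1)) (Vseq k) (hImp k) adef s)
  have hbound : ∀ k s, Vseq k s ≤ Vstar s := by
    intro k
    refine sub_le_super P r γ hP0 hP1 hγ0 hγ1 (bk k) _ _
      (fun s => le_of_eq (hfix k s)) ?_
    intro s
    rw [hVstar s]
    exact le_ciSup (Set.Finite.bddAbove (Set.finite_range _)) (bk k s)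
  refine ⟨hmono, hbound, ?_⟩
  have huniq : ∀ (b : St → ∀ i, A i) (V W : St → ℝ),
      (∀ s, V s = QV P r γ V s (b s)) → (∀ s, W s = QV P r γ W s (b s)) → V = W := by
    intro b V W hV hW
    funext s
    exact le_antisymm
      (sub_le_super P r γ hP0 hP1 hγ0 hγ1 b V W
        (fun s => le_of_eq (hV s)) (fun s => le_of_eq (hW s).symm) s)
      (sub_le_super P r γ hP0 hP1 hγ0 hγ1 b W V
        (fun s => le_of_eq (hW s)) (fun s => le_of_eq (hV s).symm) s)
  have hval_eq : ∀ k, Vseq k = hval P r γ (bk k) := by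
    intro k
    have hex : ∃ V : St → ℝ, ∀ s, V s = QV P r γ V s (bk k s) := ⟨Vseq k, hfix k⟩
    rw [hval, dif_pos hex]
    exact huniq (bk k) _ _ (hfix k) hex.choose_spec
  have hfin : (Set.range Vseq).Finite := by
    refine Set.Finite.subset (Set.finite_range (hval (St := St) (A := A) P r γ)) ?_
    rintro _ ⟨k, rfl⟩
    exact ⟨bk k, (hval_eq k).symm⟩
  set g : ℕ → ℝ := fun k => ∑ s, Vseq k s with hg
  have hgfin : (Set.range g).Finite := by
    refine Set.Finite.subset (hfin.image (fun V : St → ℝ => ∑ s, V s)) ?_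
    rintro _ ⟨k, rfl⟩
    exact ⟨Vseq k, ⟨k, rfl⟩, rfl⟩
  have hgmono : Monotone g :=
    monotone_nat_of_le_succ (fun k => Finset.sum_le_sum (fun s _ => hmono k s))
  obtain ⟨x, hx, hxmax⟩ :=
    Set.Finite.exists_maximalFor id (Set.range g) hgfin ⟨g 0, ⟨0, rfl⟩⟩
  obtain ⟨K, rfl⟩ := hx
  have hVle : ∀ k k', k ≤ k' → ∀ s, Vseq k s ≤ Vseq k' s := by
    intro k k' hkk
    induction hkk with
    | refl => exact fun s => le_rfl
    | step _ ih => exact fun s => (ih s).trans (hmono _ s)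
  refine ⟨Vseq K, K, fun k hk s => ?_⟩
  have hgk : g K = g k := le_antisymm (hgmono hk) (hxmax ⟨k, rfl⟩ (hgmono hk))
  have hsum : ∑ s : St, Vseq K s = ∑ s : St, Vseq k s := hgk
  exact ((Finset.sum_eq_sum_iff_of_le (fun s _ => hVle K k hk s)).1 hsum s
    (Finset.mem_univ s)).symm
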